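/- For a non-negative random variable H and δ ∈ (0,1), the product q(s) = E[H^{-sδ}]·E[H^{-(1-s)δ}] is monotonically nondecreasing as s moves away from 1/2 in either direction; in particular, for s < 0 ('greedy' power allocation), q(s) ≥ q(0), so greedy power allocations are worse than constant power under the SINR-outage metric. -/

import Mathlib

open MeasureTheory Real Set

section Aux

variable {Ω : Type*} [MeasurableSpace Ω] (μ : Measure Ω) [IsProbabilityMeasure μ]

lemma integral_rpow_pos (H : Ω → ℝ) (hHpos : ∀ ω, 0 < H ω)
    (hint : ∀ t : ℝ, Integrable (fun ω => H ω ^ t) μ) (t : ℝ) :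
    0 < ∫ ω, H ω ^ t ∂μ := by
  rw [integral_pos_iff_support_of_nonneg (fun ω => (Real.rpow_pos_of_pos (hHpos ω) t).le)
    (hint t)]
  have : Function.support (fun ω => H ω ^ t) = Set.univ := by
    ext ω; simp [(Real.rpow_pos_of_pos (hHpos ω) t).ne']
  rw [this]; simp

/-- Hölder: log-convexity of `t ↦ ∫ H^t`. -/
lemma holder_step (H : Ω → ℝ) (hHpos : ∀ ω, 0 < H ω)
    (hint : ∀ t : ℝ, Integrable (fun ω => H ω ^ t) μ)
    (u v a b : ℝ) (ha : 0 ≤ a) (hb : 0 ≤ b) (hab : a + b = 1) :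
    ∫ ω, H ω ^ (a * u + b * v) ∂μ ≤
      (∫ ω, H ω ^ u ∂μ) ^ a * (∫ ω, H ω ^ v ∂μ) ^ b := by
  rcases eq_or_lt_of_le ha with ha0 | ha'
  · have hb1 : b = 1 := by linarith
    simp [← ha0, hb1]
  rcases eq_or_lt_of_le hb with hb0 | hb'
  · have ha1 : a = 1 := by linarith
    simp [← hb0, ha1]
  have ha1 : a < 1 := by linarith
  have hpq : (1/a : ℝ).HolderConjugate (1/b) := by
    constructor
    · simpa using hab
    · positivity
    · positivity
  have hmem : ∀ (c w : ℝ), 0 < c →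
      MemLp (fun ω => H ω ^ (c * w)) (ENNReal.ofReal (1/c)) μ := by
    intro c w hc
    have h1 : MemLp (fun ω => ‖H ω ^ w‖ ^ (ENNReal.ofReal c).toReal)
        ((1 : ENNReal) / ENNReal.ofReal c) μ :=
      (memLp_norm_rpow_iff (hint w).aestronglyMeasurable
        (by simp [ENNReal.ofReal_eq_zero, not_le, hc])
        ENNReal.ofReal_ne_top).2 (memLp_one_iff_integrable.2 (hint w))
    have heq : (fun ω => ‖H ω ^ w‖ ^ (ENNReal.ofReal c).toReal)
        = fun ω => H ω ^ (c * w) := by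
      funext ω
      rw [ENNReal.toReal_ofReal hc.le,
        Real.norm_of_nonneg (Real.rpow_pos_of_pos (hHpos ω) w).le,
        ← Real.rpow_mul (hHpos ω).le, mul_comm]
    have hexp : (1 : ENNReal) / ENNReal.ofReal c = ENNReal.ofReal (1/c) := by
      rw [one_div, one_div, ENNReal.ofReal_inv_of_pos hc]
    rw [heq, hexp] at h1
    exact h1
  have key := integral_mul_le_Lp_mul_Lq_of_nonneg hpq
    (f := fun ω => H ω ^ (a * u)) (g := fun ω => H ω ^ (b * v))
    (Filter.Eventually.of_forall fun ω => (Real.rpow_pos_of_pos (hHpos ω) _).le)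
    (Filter.Eventually.of_forall fun ω => (Real.rpow_pos_of_pos (hHpos ω) _).le)
    (hmem a u ha') (hmem b v hb')
  have h1 : (fun ω => H ω ^ (a * u) * H ω ^ (b * v))
      = fun ω => H ω ^ (a * u + b * v) := by
    funext ω; rw [← Real.rpow_add (hHpos ω)]
  have h2 : (fun ω => (H ω ^ (a * u)) ^ (1/a : ℝ)) = fun ω => H ω ^ u := by
    funext ω; rw [← Real.rpow_mul (hHpos ω).le]
    congr 1; field_simp
  have h3 : (fun ω => (H ω ^ (b * v)) ^ (1/b : ℝ)) = fun ω => H ω ^ v := by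
    funext ω; rw [← Real.rpow_mul (hHpos ω).le]
    congr 1; field_simp
  have h4 : (1 : ℝ) / (1/a) = a := by field_simp
  have h5 : (1 : ℝ) / (1/b) = b := by field_simp
  simp only [h1, h2, h3, h4, h5] at key
  exact key

end Aux

/-- The product `q(s) = E[H^{-sδ}] E[H^{-(1-s)δ}]` is nondecreasing as `s` moves away from
`1/2` in either direction (nonincreasing on `(-∞,1/2]`, nondecreasing on `[1/2,∞)`);
in particular for `s < 0` ("greedy" power allocation) `q(s) ≥ q(0)`, so greedy power
allocations are worse than constant power. -/


theorem statement18 {Ω : Type*} [MeasurableSpace Ω] (μ : Measure Ω) [IsProbabilityMeasure μ]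
    (H : Ω → ℝ) (hHpos : ∀ ω, 0 < H ω) (δ : ℝ) (hδ : δ ∈ Set.Ioo (0 : ℝ) 1)
    (hint : ∀ t : ℝ, Integrable (fun ω => H ω ^ t) μ) :
    AntitoneOn (fun s : ℝ => (∫ ω, H ω ^ (-(s * δ)) ∂μ) * ∫ ω, H ω ^ (-((1 - s) * δ)) ∂μ)
      (Set.Iic (1/2 : ℝ)) ∧
    MonotoneOn (fun s : ℝ => (∫ ω, H ω ^ (-(s * δ)) ∂μ) * ∫ ω, H ω ^ (-((1 - s) * δ)) ∂μ)
      (Set.Ici (1/2 : ℝ)) ∧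
    (∀ s : ℝ, s < 0 →
      (∫ ω, H ω ^ (-((0 : ℝ) * δ)) ∂μ) * ∫ ω, H ω ^ (-((1 - (0 : ℝ)) * δ)) ∂μ ≤
      (∫ ω, H ω ^ (-(s * δ)) ∂μ) * ∫ ω, H ω ^ (-((1 - s) * δ)) ∂μ) := by
  set f : ℝ → ℝ := fun t => ∫ ω, H ω ^ t ∂μ with hf
  have hfpos : ∀ t : ℝ, 0 < f t := integral_rpow_pos μ H hHpos hint
  set q : ℝ → ℝ := fun s => f (-(s * δ)) * f (-((1 - s) * δ)) with hq
  have hsym : ∀ r : ℝ, q (1 - r) = q r := by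
    intro r
    simp only [hq]
    rw [show -((1 - (1 - r)) * δ) = -(r * δ) from by ring, mul_comm]
  have hA : AntitoneOn q (Set.Iic (1/2 : ℝ)) := by
    intro s hs t ht hst
    rcases eq_or_lt_of_le hst with rfl | hst'
    · exact le_refl _
    simp only [Set.mem_Iic] at hs ht
    have hd : (0:ℝ) < 1 - 2 * s := by linarith
    set a : ℝ := (1 - s - t) / (1 - 2 * s) with hadef
    set b : ℝ := (t - s) / (1 - 2 * s) with hbdef
    have ha : 0 ≤ a := by
      apply div_nonneg _ hd.le; linarith
    have hb : 0 ≤ b := by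
      apply div_nonneg _ hd.le; linarith
    have hab : a + b = 1 := by
      rw [hadef, hbdef, ← add_div, div_eq_one_iff_eq hd.ne']; ring
    have hst2 : a * s + b * (1 - s) = t := by
      rw [hadef, hbdef, div_mul_eq_mul_div, div_mul_eq_mul_div, ← add_div, div_eq_iff hd.ne']; ring
    have h1 := holder_step μ H hHpos hint (-(s * δ)) (-((1 - s) * δ)) a b ha hb hab
    have h2 := holder_step μ H hHpos hint (-((1 - s) * δ)) (-(s * δ)) a b ha hb hab
    rw [show a * -(s * δ) + b * -((1 - s) * δ) = -(t * δ) from by rw [← hst2]; ring] at h1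
    rw [show a * -((1 - s) * δ) + b * -(s * δ) = -((1 - t) * δ) from by
      rw [show (1 - t : ℝ) = (a + b) - (a * s + b * (1 - s)) from by rw [hab, hst2]]; ring] at h2
    have hx := hfpos (-(s * δ))
    have hy := hfpos (-((1 - s) * δ))
    calc q t ≤ (f (-(s * δ)) ^ a * f (-((1 - s) * δ)) ^ b) *
          (f (-((1 - s) * δ)) ^ a * f (-(s * δ)) ^ b) := by
          exact mul_le_mul h1 h2 (hfpos _).le
            (by positivity)
      _ = (f (-(s * δ)) ^ a * f (-(s * δ)) ^ b) *
          (f (-((1 - s) * δ)) ^ a * f (-((1 - s) * δ)) ^ b) := by ring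
      _ = f (-(s * δ)) ^ (a + b) * f (-((1 - s) * δ)) ^ (a + b) := by
          rw [← Real.rpow_add hx, ← Real.rpow_add hy]
      _ = q s := by rw [hab, Real.rpow_one, Real.rpow_one]
  have hM : MonotoneOn q (Set.Ici (1/2 : ℝ)) := by
    intro s hs t ht hst
    simp only [Set.mem_Ici] at hs ht
    have := hA (show (1 - t : ℝ) ∈ Set.Iic (1/2) from by simp; linarith)
      (show (1 - s : ℝ) ∈ Set.Iic (1/2) from by simp; linarith) (by linarith)
    rwa [hsym, hsym] at this
  refine ⟨hA, hM, fun s hs => ?_⟩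
  exact hA (show s ∈ Set.Iic (1/2 : ℝ) from by simp; linarith)
    (show (0:ℝ) ∈ Set.Iic (1/2) from by norm_num) hs.le
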